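/- Let (V_j)_{j ∈ J} and (W_s)_{s ∈ S} be two finite families of finite sets of points in ℝ² (the convex parts of two decomposed non-convex polygons). Suppose that for every j ∈ J and s ∈ S there exist c, d ∈ ℝ such that every v ∈ V_j satisfies v.2 − c·v.1 − d ≤ 0 and every w ∈ W_s satisfies w.2 − c·w.1 − d ≥ 0. Then the two-dimensional Lebesgue measure of (⋃_{j ∈ J} convexHull ℝ V_j) ∩ (⋃_{s ∈ S} convexHull ℝ W_s) is zero. (This is the correctness of the model's non-overlapping constraints for non-convex polygons decomposed into convex parts: it suffices to have a separation line for each pair of parts belonging to distinct polygons.) -/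
import Mathlib

/-- The line `y = c x + d` as an affine subspace of `ℝ × ℝ`. -/
noncomputable def lineSub (c d : ℝ) : AffineSubspace ℝ (ℝ × ℝ) where
  carrier := {p | p.2 = c * p.1 + d}
  smul_vsub_vadd_mem' := by
    intro t p1 p2 p3 h1 h2 h3
    simp only [Set.mem_setOf_eq] at *
    show (t • (p1 - p2) + p3).2 = c * (t • (p1 - p2) + p3).1 + d
    simp only [Prod.snd_add, Prod.fst_add, Prod.smul_fst, Prod.smul_snd, Prod.fst_sub,
      Prod.snd_sub, smul_eq_mul]
    rw [h1, h2, h3]; ring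

/-- For two finite families of finite vertex sets (the convex parts of two
decomposed non-convex polygons), if every pair of parts from distinct polygons admits a
separation line, then the intersection of the two unions of convex hulls has
two-dimensional Lebesgue measure zero. -/
theorem volume_union_inter_eq_zero_of_separating_lines
    {J S : Type*} [Fintype J] [Fintype S]
    (V : J → Set (ℝ × ℝ)) (W : S → Set (ℝ × ℝ))
    (hV : ∀ j, (V j).Finite) (hW : ∀ s, (W s).Finite)
    (h : ∀ j s, ∃ c d : ℝ,
      (∀ v ∈ V j, v.2 - c * v.1 - d ≤ 0) ∧ (∀ w ∈ W s, 0 ≤ w.2 - c * w.1 - d)) :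
    MeasureTheory.volume ((⋃ j, convexHull ℝ (V j)) ∩ (⋃ s, convexHull ℝ (W s))) = 0 := by
  rw [Set.iUnion_inter]
  refine MeasureTheory.measure_iUnion_null fun j => ?_
  rw [Set.inter_iUnion]
  refine MeasureTheory.measure_iUnion_null fun s => ?_
  obtain ⟨c, d, h1, h2⟩ := h j s
  have lin : IsLinearMap ℝ (fun p : ℝ × ℝ => p.2 - c * p.1) :=
    ⟨fun x y => by simp; ring, fun t x => by simp; ring⟩
  refine MeasureTheory.measure_mono_null ?_
    (MeasureTheory.Measure.addHaar_affineSubspace MeasureTheory.volume (lineSub c d) ?_)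
  · rintro p ⟨hp1, hp2⟩
    have hle : p.2 - c * p.1 ≤ d :=
      convexHull_min (fun v hv => by have := h1 v hv; simp only [Set.mem_setOf_eq]; linarith)
        (convex_halfSpace_le lin d) hp1
    have hge : d ≤ p.2 - c * p.1 :=
      convexHull_min (fun w hw => by have := h2 w hw; simp only [Set.mem_setOf_eq]; linarith)
        (convex_halfSpace_ge lin d) hp2
    show p.2 = c * p.1 + d
    linarith
  · intro htop
    have : ((0 : ℝ), d + 1) ∈ lineSub c d := htop ▸ AffineSubspace.mem_top ℝ _ _
    have : d + 1 = c * 0 + d := this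
    linarith
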